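/- Let b ∈ (0,1], λ > 0, M > 0 with b·λ·M ≤ 1. Consider the Markov transition on [0,∞) taking state x to x + X − M·1{x ≥ M}·1{E}, where X is exponentially distributed with rate λ, E is Bernoulli with success probability b, and X, E are independent of each other and of the current state. Then no probability measure on [0,∞) is stationary for this transition; that is, there is no probability distribution μ such that if B has law μ and is independent of (X, E), then B + X − M·1{B ≥ M}·1{E} also has law μ. -/

import Mathlib

open MeasureTheory
open scoped ENNReal

noncomputable def expMeasure' (lam : ℝ) : Measure ℝ :=
  volume.withDensity
    (fun x => ENNReal.ofReal (if 0 ≤ x then lam * Real.exp (-lam * x) else 0))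

noncomputable def bernoulliMeasure (b : ℝ) : Measure Bool :=
  ENNReal.ofReal b • Measure.dirac true + ENNReal.ofReal (1 - b) • Measure.dirac false

lemma bernoulli_lintegral (b : ℝ) (g : Bool → ℝ≥0∞) :
    ∫⁻ e, g e ∂bernoulliMeasure b
      = ENNReal.ofReal b * g true + ENNReal.ofReal (1 - b) * g false := by
  simp [bernoulliMeasure, lintegral_add_measure, lintegral_smul_measure, lintegral_dirac]

lemma expMeasure'_eq (lam : ℝ) :
    expMeasure' lam = volume.withDensity (ProbabilityTheory.exponentialPDF lam) := by
  unfold expMeasure'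
  congr 1
  funext x
  rw [ProbabilityTheory.exponentialPDF_eq]
  congr 1
  by_cases h : 0 ≤ x <;> simp [h, neg_mul]

lemma expMeasure'_lintegral {lam : ℝ} (hlam : 0 < lam) {s : ℝ} (hs : 0 ≤ s) :
    ∫⁻ w, ENNReal.ofReal (Real.exp (-(s * w))) ∂expMeasure' lam
      = ENNReal.ofReal (lam / (lam + s)) := by
  have hls : 0 < lam + s := by linarith
  rw [expMeasure'_eq,
    lintegral_withDensity_eq_lintegral_mul _
      (show Measurable (ProbabilityTheory.exponentialPDF lam) from
        (ProbabilityTheory.measurable_exponentialPDFReal lam).ennreal_ofReal)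
      (by fun_prop)]
  have hpt : ∀ w, ProbabilityTheory.exponentialPDF lam w * ENNReal.ofReal (Real.exp (-(s * w)))
      = ENNReal.ofReal (lam / (lam + s)) * ProbabilityTheory.exponentialPDF (lam + s) w := by
    intro w
    rw [ProbabilityTheory.exponentialPDF_eq, ProbabilityTheory.exponentialPDF_eq]
    by_cases h : 0 ≤ w
    · simp only [if_pos h]
      rw [← ENNReal.ofReal_mul (by positivity), ← ENNReal.ofReal_mul (by positivity)]
      congr 1
      rw [show -((lam + s) * w) = -(lam * w) + -(s * w) by ring, Real.exp_add]
      field_simp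
    · simp [if_neg h]
  calc ∫⁻ w, (ProbabilityTheory.exponentialPDF lam * fun w => ENNReal.ofReal (Real.exp (-(s * w)))) w
      = ∫⁻ w, ENNReal.ofReal (lam / (lam + s)) * ProbabilityTheory.exponentialPDF (lam + s) w := by
        simp only [Pi.mul_apply]; exact lintegral_congr hpt
    _ = ENNReal.ofReal (lam / (lam + s)) * ∫⁻ w, ProbabilityTheory.exponentialPDF (lam + s) w :=
        lintegral_const_mul' _ _ ENNReal.ofReal_ne_top
    _ = ENNReal.ofReal (lam / (lam + s)) := by
        rw [ProbabilityTheory.lintegral_exponentialPDF_eq_one hls, mul_one]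

lemma expMeasure'_prob {lam : ℝ} (hlam : 0 < lam) : IsProbabilityMeasure (expMeasure' lam) := by
  constructor
  rw [← lintegral_one]
  have h := expMeasure'_lintegral hlam (le_refl (0:ℝ))
  simpa [hlam.ne'] using h

lemma bernoulli_prob {b : ℝ} (h0 : 0 ≤ b) (h1 : b ≤ 1) :
    IsProbabilityMeasure (bernoulliMeasure b) := by
  constructor
  simp [bernoulliMeasure]
  rw [← ENNReal.ofReal_add h0 (by linarith)]
  norm_num

lemma exp_sub_one_le_aux {x : ℝ} (hx : 0 ≤ x) : Real.exp x - 1 ≤ x * Real.exp x := by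
  have h2 : Real.exp (-x) * Real.exp x = 1 := by
    rw [← Real.exp_add]; simp
  have h3 := mul_le_mul_of_nonneg_right (Real.add_one_le_exp (-x)) (Real.exp_pos x).le
  rw [h2] at h3
  nlinarith [h3]

set_option maxHeartbeats 2000000 in
theorem no_stationary_distribution_of_energy_buffer
    (b lam M : ℝ) (hb0 : 0 < b) (hb1 : b ≤ 1) (hlam : 0 < lam) (hM : 0 < M)
    (hpsi : b * lam * M ≤ 1) :
    ¬ ∃ μ : Measure ℝ, IsProbabilityMeasure μ ∧ μ (Set.Iio 0) = 0 ∧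
      Measure.map
        (fun p : (ℝ × ℝ) × Bool =>
          p.1.1 + p.1.2 - (if M ≤ p.1.1 ∧ p.2 = true then M else 0))
        ((μ.prod (expMeasure' lam)).prod (bernoulliMeasure b)) = μ := by
  rintro ⟨μ, hprob, hnn, hstat⟩
  haveI := hprob
  haveI hexp : IsProbabilityMeasure (expMeasure' lam) := expMeasure'_prob hlam
  haveI hber : IsProbabilityMeasure (bernoulliMeasure b) := bernoulli_prob hb0.le hb1
  set T : (ℝ × ℝ) × Bool → ℝ := fun p =>
    p.1.1 + p.1.2 - (if M ≤ p.1.1 ∧ p.2 = true then M else 0) with hTdef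
  have hTmeas : Measurable T := by
    have hset : MeasurableSet {p : (ℝ × ℝ) × Bool | M ≤ p.1.1 ∧ p.2 = true} := by
      have heq : {p : (ℝ × ℝ) × Bool | M ≤ p.1.1 ∧ p.2 = true}
          = ((fun p : (ℝ × ℝ) × Bool => p.1.1) ⁻¹' Set.Ici M)
            ∩ ((fun p : (ℝ × ℝ) × Bool => p.2) ⁻¹' {true}) := by
        ext p; simp [Set.mem_setOf_eq]
      rw [heq]
      exact (measurable_fst.fst measurableSet_Ici).inter
        (measurable_snd (MeasurableSet.singleton true))
    exact (measurable_fst.fst.add measurable_fst.snd).sub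
      (Measurable.ite hset measurable_const measurable_const)
  set Φ : ℝ → ℝ≥0∞ := fun s => ∫⁻ x, ENNReal.ofReal (Real.exp (-(s * x))) ∂μ with hΦdef
  set Ψ : ℝ → ℝ≥0∞ :=
    fun s => ∫⁻ x in Set.Ici M, ENNReal.ofReal (Real.exp (-(s * x))) ∂μ with hΨdef
  set χ : ℝ → ℝ≥0∞ :=
    fun s => ∫⁻ x in (Set.Ici M)ᶜ, ENNReal.ofReal (Real.exp (-(s * x))) ∂μ with hχdef
  have hmeas_e : ∀ s : ℝ, Measurable fun x : ℝ => ENNReal.ofReal (Real.exp (-(s * x))) := by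
    intro s; fun_prop
  have hsplit : ∀ s : ℝ, Φ s = Ψ s + χ s :=
    fun s => (lintegral_add_compl _ measurableSet_Ici).symm
  have hae : ∀ᵐ x ∂μ, 0 ≤ x := by
    rw [ae_iff]
    simp only [not_le]
    exact hnn
  have hΦ_le : ∀ s : ℝ, 0 ≤ s → Φ s ≤ 1 := by
    intro s hs
    calc Φ s ≤ ∫⁻ _x, 1 ∂μ := by
          refine lintegral_mono_ae (hae.mono fun x hx => ?_)
          exact ENNReal.ofReal_le_one.mpr (Real.exp_le_one_iff.mpr (by nlinarith))
      _ = 1 := by simp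
  have hΦne : ∀ s : ℝ, 0 ≤ s → Φ s ≠ ⊤ :=
    fun s hs => (lt_of_le_of_lt (hΦ_le s hs) ENNReal.one_lt_top).ne
  have hΨleΦ : ∀ s : ℝ, Ψ s ≤ Φ s := fun s => setLIntegral_le_lintegral _ _
  have hχleΦ : ∀ s : ℝ, χ s ≤ Φ s := fun s => setLIntegral_le_lintegral _ _
  have hΨne : ∀ s : ℝ, 0 ≤ s → Ψ s ≠ ⊤ :=
    fun s hs => (lt_of_le_of_lt (le_trans (hΨleΦ s) (hΦ_le s hs)) ENNReal.one_lt_top).ne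
  have hχne : ∀ s : ℝ, 0 ≤ s → χ s ≠ ⊤ :=
    fun s hs => (lt_of_le_of_lt (le_trans (hχleΦ s) (hΦ_le s hs)) ENNReal.one_lt_top).ne
  have hμne : μ ≠ 0 := IsProbabilityMeasure.ne_zero μ
  haveI : (ae μ).NeBot := ae_neBot.mpr hμne
  have hΦ0 : ∀ s : ℝ, Φ s ≠ 0 := by
    intro s h
    rw [hΦdef] at h
    simp only at h
    rw [lintegral_eq_zero_iff (hmeas_e s)] at h
    obtain ⟨x, hx⟩ := h.exists
    simp only [Pi.zero_apply, ENNReal.ofReal_eq_zero] at hx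
    exact absurd hx (not_le.mpr (Real.exp_pos _))
  -- the key functional equation
  have key : ∀ s : ℝ, 0 < s →
      s * (Φ s).toReal = lam * b * (Real.exp (s * M) - 1) * (Ψ s).toReal := by
    intro s hs
    have hls : 0 < lam + s := by linarith
    have hexpint : ∀ c : ℝ,
        ∫⁻ w, ENNReal.ofReal (Real.exp (-(s * (c + w)))) ∂expMeasure' lam
          = ENNReal.ofReal (Real.exp (-(s * c))) * ENNReal.ofReal (lam / (lam + s)) := by
      intro c
      have hpt : ∀ w : ℝ, ENNReal.ofReal (Real.exp (-(s * (c + w))))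
          = ENNReal.ofReal (Real.exp (-(s * c))) * ENNReal.ofReal (Real.exp (-(s * w))) := by
        intro w
        rw [show (-(s * (c + w))) = (-(s * c)) + (-(s * w)) by ring, Real.exp_add,
          ENNReal.ofReal_mul (Real.exp_pos _).le]
      simp_rw [hpt]
      rw [lintegral_const_mul' _ _ ENNReal.ofReal_ne_top, expMeasure'_lintegral hlam hs.le]
    have hcmeas : Measurable fun x : ℝ => (if M ≤ x then M else (0:ℝ)) :=
      Measurable.ite measurableSet_Ici measurable_const measurable_const
    have hAmeas : Measurable fun a : ℝ × ℝ =>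
        ENNReal.ofReal (Real.exp (-(s * (a.1 + a.2 - if M ≤ a.1 then M else 0)))) := by
      apply Measurable.ennreal_ofReal
      apply Real.measurable_exp.comp
      exact (((measurable_fst.add measurable_snd).sub (hcmeas.comp measurable_fst)).const_mul s).neg
    have hBmeas : Measurable fun a : ℝ × ℝ =>
        ENNReal.ofReal (Real.exp (-(s * (a.1 + a.2)))) := by fun_prop
    -- step 0 : stationarity
    have h0 : Φ s = ∫⁻ p, ENNReal.ofReal (Real.exp (-(s * T p)))
        ∂((μ.prod (expMeasure' lam)).prod (bernoulliMeasure b)) := by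
      rw [hΦdef]
      simp only []
      conv_lhs => rw [← hstat]
      rw [lintegral_map (hmeas_e s) hTmeas]
    -- step 1 : integrate out the Bernoulli coordinate
    have h1 : ∫⁻ p, ENNReal.ofReal (Real.exp (-(s * T p)))
          ∂((μ.prod (expMeasure' lam)).prod (bernoulliMeasure b))
        = ∫⁻ a, (ENNReal.ofReal b *
              ENNReal.ofReal (Real.exp (-(s * (a.1 + a.2 - if M ≤ a.1 then M else 0))))
            + ENNReal.ofReal (1 - b) * ENNReal.ofReal (Real.exp (-(s * (a.1 + a.2)))))
          ∂(μ.prod (expMeasure' lam)) := by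
      rw [lintegral_prod _ ((show Measurable fun p : (ℝ × ℝ) × Bool =>
        ENNReal.ofReal (Real.exp (-(s * T p))) from (hmeas_e s).comp hTmeas).aemeasurable)]
      refine lintegral_congr fun a => ?_
      rw [bernoulli_lintegral]
      congr 2
      · simp [hTdef]
      · simp [hTdef]
    -- step 2 : split and integrate out the exponential coordinate
    have h2 : ∫⁻ a, (ENNReal.ofReal b *
              ENNReal.ofReal (Real.exp (-(s * (a.1 + a.2 - if M ≤ a.1 then M else 0))))
            + ENNReal.ofReal (1 - b) * ENNReal.ofReal (Real.exp (-(s * (a.1 + a.2)))))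
          ∂(μ.prod (expMeasure' lam))
        = ENNReal.ofReal b * ((ENNReal.ofReal (Real.exp (s * M)) * Ψ s + χ s)
              * ENNReal.ofReal (lam / (lam + s)))
          + ENNReal.ofReal (1 - b) * (Φ s * ENNReal.ofReal (lam / (lam + s))) := by
      rw [lintegral_add_left (hAmeas.const_mul _)]
      rw [lintegral_const_mul' _ _ ENNReal.ofReal_ne_top,
        lintegral_const_mul' _ _ ENNReal.ofReal_ne_top]
      congr 1
      · congr 1
        rw [lintegral_prod _ hAmeas.aemeasurable]
        have hinner : ∀ x : ℝ,
            (∫⁻ w, ENNReal.ofReal (Real.exp (-(s * (x + w - if M ≤ x then M else 0))))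
              ∂expMeasure' lam)
            = ENNReal.ofReal (Real.exp (-(s * (x - if M ≤ x then M else 0))))
              * ENNReal.ofReal (lam / (lam + s)) := by
          intro x
          have : ∀ w : ℝ, x + w - (if M ≤ x then M else 0)
              = (x - (if M ≤ x then M else 0)) + w := by intro w; ring
          simp_rw [this]
          exact hexpint _
        simp_rw [hinner]
        rw [lintegral_mul_const' _ _ ENNReal.ofReal_ne_top]
        congr 1
        rw [← lintegral_add_compl
          (fun x => ENNReal.ofReal (Real.exp (-(s * (x - if M ≤ x then M else 0)))))
          (measurableSet_Ici (a := M))]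
        have e1 : ∫⁻ x in Set.Ici M,
            ENNReal.ofReal (Real.exp (-(s * (x - if M ≤ x then M else 0)))) ∂μ
            = ∫⁻ x in Set.Ici M,
              ENNReal.ofReal (Real.exp (s * M)) * ENNReal.ofReal (Real.exp (-(s * x))) ∂μ := by
          refine setLIntegral_congr_fun measurableSet_Ici (fun x hx => ?_)
          have hx' : M ≤ x := hx
          rw [if_pos hx', show -(s * (x - M)) = s * M + -(s * x) by ring, Real.exp_add,
            ENNReal.ofReal_mul (Real.exp_pos _).le]
        have e2 : ∫⁻ x in (Set.Ici M)ᶜ,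
            ENNReal.ofReal (Real.exp (-(s * (x - if M ≤ x then M else 0)))) ∂μ
            = ∫⁻ x in (Set.Ici M)ᶜ, ENNReal.ofReal (Real.exp (-(s * x))) ∂μ := by
          refine setLIntegral_congr_fun measurableSet_Ici.compl (fun x hx => ?_)
          have hx' : ¬ M ≤ x := by simpa [Set.mem_compl_iff, Set.mem_Ici] using hx
          rw [if_neg hx', sub_zero]
        rw [e1, e2, lintegral_const_mul' _ _ ENNReal.ofReal_ne_top]
      · rw [lintegral_prod _ hBmeas.aemeasurable]
        simp_rw [hexpint]
        rw [lintegral_mul_const' _ _ ENNReal.ofReal_ne_top]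
    -- combine and pass to real numbers
    have comb : Φ s
        = ENNReal.ofReal b * ((ENNReal.ofReal (Real.exp (s * M)) * Ψ s + χ s)
              * ENNReal.ofReal (lam / (lam + s)))
          + ENNReal.ofReal (1 - b) * (Φ s * ENNReal.ofReal (lam / (lam + s))) := by
      rw [h1, h2] at h0
      exact h0
    have hin_ne : ENNReal.ofReal (Real.exp (s * M)) * Ψ s + χ s ≠ ⊤ :=
      ENNReal.add_ne_top.mpr ⟨ENNReal.mul_ne_top ENNReal.ofReal_ne_top (hΨne s hs.le),
        hχne s hs.le⟩
    have ht1 : ENNReal.ofReal b * ((ENNReal.ofReal (Real.exp (s * M)) * Ψ s + χ s)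
          * ENNReal.ofReal (lam / (lam + s))) ≠ ⊤ :=
      ENNReal.mul_ne_top ENNReal.ofReal_ne_top
        (ENNReal.mul_ne_top hin_ne ENNReal.ofReal_ne_top)
    have ht2 : ENNReal.ofReal (1 - b) * (Φ s * ENNReal.ofReal (lam / (lam + s))) ≠ ⊤ :=
      ENNReal.mul_ne_top ENNReal.ofReal_ne_top
        (ENNReal.mul_ne_top (hΦne s hs.le) ENNReal.ofReal_ne_top)
    have hre := congrArg ENNReal.toReal comb
    rw [ENNReal.toReal_add ht1 ht2, ENNReal.toReal_mul, ENNReal.toReal_mul,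
      ENNReal.toReal_mul, ENNReal.toReal_mul,
      ENNReal.toReal_add (ENNReal.mul_ne_top ENNReal.ofReal_ne_top (hΨne s hs.le))
        (hχne s hs.le),
      ENNReal.toReal_mul, ENNReal.toReal_ofReal hb0.le,
      ENNReal.toReal_ofReal (Real.exp_pos _).le,
      ENNReal.toReal_ofReal (by linarith : (0:ℝ) ≤ 1 - b),
      ENNReal.toReal_ofReal (by positivity : (0:ℝ) ≤ lam / (lam + s))] at hre
    have hFPX : (Φ s).toReal = (Ψ s).toReal + (χ s).toReal := by
      rw [hsplit s, ENNReal.toReal_add (hΨne s hs.le) (hχne s hs.le)]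
    set F := (Φ s).toReal
    set P := (Ψ s).toReal
    set X := (χ s).toReal
    have hre' : F * (lam + s)
        = b * ((Real.exp (s * M) * P + X) * lam) + (1 - b) * (F * lam) := by
      field_simp [ne_of_gt hls] at hre
      linear_combination hre
    linear_combination hre' - b * lam * hFPX
  -- basic real quantities
  have hcompl : (Set.Ici M)ᶜ = Set.Iio M := Set.compl_Ici
  have hmeasIow : μ (Set.Ici M) + μ (Set.Iio M) = 1 := by
    rw [← hcompl, measure_add_measure_compl measurableSet_Ici, measure_univ]
  have hIcile : μ (Set.Ici M) ≤ 1 := prob_le_one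
  have hIiole : μ (Set.Iio M) ≤ 1 := prob_le_one
  have hIcine : μ (Set.Ici M) ≠ ⊤ := (lt_of_le_of_lt hIcile ENNReal.one_lt_top).ne
  have hIione : μ (Set.Iio M) ≠ ⊤ := (lt_of_le_of_lt hIiole ENNReal.one_lt_top).ne
  set p := (μ (Set.Ici M)).toReal with hpdef
  set q := (μ (Set.Iio M)).toReal with hqdef
  have hpq : p + q = 1 := by
    rw [hpdef, hqdef, ← ENNReal.toReal_add hIcine hIione, hmeasIow, ENNReal.toReal_one]
  have hp0 : 0 ≤ p := ENNReal.toReal_nonneg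
  have hq0 : 0 ≤ q := ENNReal.toReal_nonneg
  -- bound (i): Ψ s ≤ exp(-(s*M)) * p
  have hPbound : ∀ s : ℝ, 0 < s → (Ψ s).toReal ≤ Real.exp (-(s * M)) * p := by
    intro s hs
    have h1 : Ψ s ≤ ENNReal.ofReal (Real.exp (-(s * M))) * μ (Set.Ici M) := by
      rw [hΨdef]
      simp only []
      rw [← setLIntegral_const]
      refine setLIntegral_mono measurable_const fun x hx => ?_
      refine ENNReal.ofReal_le_ofReal (Real.exp_le_exp.mpr ?_)
      have hx' : M ≤ x := hx
      nlinarith [hs.le, hx']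
    calc (Ψ s).toReal ≤ (ENNReal.ofReal (Real.exp (-(s * M))) * μ (Set.Ici M)).toReal :=
          ENNReal.toReal_mono (ENNReal.mul_ne_top ENNReal.ofReal_ne_top hIcine) h1
      _ = Real.exp (-(s * M)) * p := by
          rw [ENNReal.toReal_mul, ENNReal.toReal_ofReal (Real.exp_pos _).le]
  -- bound (ii): χ s ≥ exp(-(s*M)) * q
  have hXbound : ∀ s : ℝ, 0 < s → Real.exp (-(s * M)) * q ≤ (χ s).toReal := by
    intro s hs
    have h1 : ENNReal.ofReal (Real.exp (-(s * M))) * μ (Set.Iio M) ≤ χ s := by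
      rw [hχdef]
      simp only [hcompl]
      rw [← setLIntegral_const]
      refine setLIntegral_mono (hmeas_e s) fun x hx => ?_
      refine ENNReal.ofReal_le_ofReal (Real.exp_le_exp.mpr ?_)
      have hx' : x < M := hx
      nlinarith [hs.le, hx'.le]
    calc Real.exp (-(s * M)) * q
        = (ENNReal.ofReal (Real.exp (-(s * M))) * μ (Set.Iio M)).toReal := by
          rw [ENNReal.toReal_mul, ENNReal.toReal_ofReal (Real.exp_pos _).le]
      _ ≤ (χ s).toReal := ENNReal.toReal_mono (hχne s hs.le) h1
  -- q must be zero
  have hqzero : q = 0 := by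
    by_contra hne
    have hqpos : 0 < q := lt_of_le_of_ne hq0 (Ne.symm hne)
    set s := min M⁻¹ (q / (2 * M * Real.exp 1)) with hsdef
    have hs : 0 < s := lt_min (by positivity) (by positivity)
    have hsM1 : s * M ≤ 1 := by
      have := min_le_left M⁻¹ (q / (2 * M * Real.exp 1))
      calc s * M ≤ M⁻¹ * M := mul_le_mul_of_nonneg_right this hM.le
        _ = 1 := inv_mul_cancel₀ hM.ne'
    have hs2 : s * M * Real.exp 1 ≤ q / 2 := by
      have h := min_le_right M⁻¹ (q / (2 * M * Real.exp 1))
      have hMe : 0 < M * Real.exp 1 := by positivity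
      calc s * M * Real.exp 1 = s * (M * Real.exp 1) := by ring
        _ ≤ (q / (2 * M * Real.exp 1)) * (M * Real.exp 1) :=
            mul_le_mul_of_nonneg_right h hMe.le
        _ = q / 2 := by field_simp
    set E := Real.exp (s * M) with hEdef
    set em := Real.exp (-(s * M)) with hemdef
    have hempos : 0 < em := Real.exp_pos _
    have hE1 : 1 + s * M ≤ E := by
      have := Real.add_one_le_exp (s * M); linarith
    have hkey := key s hs
    have hF : (Φ s).toReal = (Ψ s).toReal + (χ s).toReal := by
      rw [hsplit s, ENNReal.toReal_add (hΨne s hs.le) (hχne s hs.le)]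
    set F := (Φ s).toReal
    set P := (Ψ s).toReal
    set X := (χ s).toReal
    have hPnn : 0 ≤ P := ENNReal.toReal_nonneg
    have hP : P ≤ em * p := hPbound s hs
    have hX : em * q ≤ X := hXbound s hs
    have hple : p ≤ 1 := by linarith
    -- multiply key by M and use b*lam*M ≤ 1
    have step1 : s * M * F ≤ (E - 1) * P := by
      have h1 : s * M * F = (lam * b * M) * (E - 1) * P := by
        linear_combination M * hkey
      rw [h1]
      have h2 : lam * b * M ≤ 1 := by nlinarith
      have hE0 : (0:ℝ) ≤ E - 1 := by nlinarith [hE1, mul_pos hs hM]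
      nlinarith [mul_nonneg (mul_nonneg (sub_nonneg.mpr h2) hE0) hPnn]
    have hsM : 0 < s * M := mul_pos hs hM
    have hPem : P ≤ em := by nlinarith [hP, hple, hempos]
    have hEsM : 0 ≤ E - 1 - s * M := by linarith
    have step2 : s * M * em * q ≤ (E - 1 - s * M) * em := by
      have c1 : s * M * (em * q) ≤ s * M * X := mul_le_mul_of_nonneg_left hX hsM.le
      have c2 : s * M * F = s * M * P + s * M * X := by rw [hF]; ring
      have c4 : (E - 1 - s * M) * P ≤ (E - 1 - s * M) * em :=
        mul_le_mul_of_nonneg_left hPem hEsM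
      nlinarith [c1, c2, c4, step1]
    have step3 : s * M * q ≤ E - 1 - s * M := by
      have := (mul_le_mul_iff_of_pos_right hempos).mp (by
        calc s * M * q * em = s * M * em * q := by ring
          _ ≤ (E - 1 - s * M) * em := step2)
      linarith [this]
    have step4 : E - 1 - s * M ≤ (s * M) * (s * M) * E := by
      have h1 : E - 1 ≤ s * M * E := exp_sub_one_le_aux (by positivity)
      nlinarith [h1, mul_le_mul_of_nonneg_left h1 hsM.le]
    have hEe : E ≤ Real.exp 1 := Real.exp_le_exp.mpr hsM1
    have step5 : q ≤ s * M * Real.exp 1 := by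
      have h7 : s * M * q ≤ s * M * (s * M * E) := by nlinarith [step3, step4]
      have h6 := le_of_mul_le_mul_left h7 hsM
      have h8 : s * M * E ≤ s * M * Real.exp 1 := mul_le_mul_of_nonneg_left hEe hsM.le
      linarith
    linarith [hs2, step5]
  -- now μ is concentrated on [M, ∞)
  have hIio0 : μ (Set.Iio M) = 0 := by
    rcases (ENNReal.toReal_eq_zero_iff _).mp hqzero with h | h
    · exact h
    · exact absurd h hIione
  have hχzero : ∀ s : ℝ, χ s = 0 := by
    intro s
    rw [hχdef]
    simp only [hcompl]
    exact setLIntegral_measure_zero _ _ hIio0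
  have hΨΦ : ∀ s : ℝ, Ψ s = Φ s := by
    intro s
    rw [hsplit s, hχzero s, add_zero]
  have hFpos : ∀ s : ℝ, 0 ≤ s → 0 < (Φ s).toReal := by
    intro s hs
    exact ENNReal.toReal_pos (hΦ0 s) (hΦne s hs)
  have k1 := key 1 one_pos
  have k2 := key 2 two_pos
  rw [hΨΦ] at k1 k2
  have hF1 := hFpos 1 zero_le_one
  have hF2 := hFpos 2 zero_le_two
  have hc1 : lam * b * (Real.exp M - 1) = 1 := by
    have h : (lam * b * (Real.exp M - 1) - 1) * (Φ 1).toReal = 0 := by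
      rw [show Real.exp M = Real.exp (1 * M) by rw [one_mul]]
      linear_combination -k1
    rcases mul_eq_zero.mp h with h' | h'
    · linarith
    · exact absurd h' (ne_of_gt hF1)
  have hc2 : lam * b * (Real.exp M * Real.exp M - 1) = 2 := by
    have hexp2 : Real.exp (2 * M) = Real.exp M * Real.exp M := by
      rw [two_mul, Real.exp_add]
    have h : (lam * b * (Real.exp M * Real.exp M - 1) - 2) * (Φ 2).toReal = 0 := by
      rw [← hexp2]
      linear_combination -k2
    rcases mul_eq_zero.mp h with h' | h'
    · linarith
    · exact absurd h' (ne_of_gt hF2)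
  have h4 : Real.exp M + 1 = 2 := by
    linear_combination hc2 - (Real.exp M + 1) * hc1
  have h5 : M + 1 ≤ Real.exp M := Real.add_one_le_exp M
  linarith
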